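/- Let L be a symmetric dn×dn matrix with L ⪰ 0, ker(L) = Π(p̃), and follower block L_ff ≻ 0. Let v be a new agent connected to two existing agents i, j such that W_vv = diag(Rᵀ(p̃_j − p̃_i))Rᵀ is invertible, and set L⁺ = L_pad + M_pad, where M_pad embeds Mᵀ D M for M = [W_jv, W_vi, −W_vv] and D ≻ 0 diagonal into the coordinates of (i, j, v). Then rank(L⁺) = rank(L) + d. -/

import Mathlib

open Matrix Kronecker

/-- The configuration obtained from the nominal one by non-uniform scaling `s`
(in the frame `R`) and translation `τ`. -/
noncomputable def nsParam (d k : ℕ) (R : Matrix (Fin d) (Fin d) ℝ)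
    (q : Fin k × Fin d → ℝ) (s τ : Fin d → ℝ) : Fin k × Fin d → ℝ :=
  ((1 : Matrix (Fin k) (Fin k) ℝ) ⊗ₖ (R * Matrix.diagonal s * Rᵀ)).mulVec q
    + fun x => τ x.2

/-- The translation plus non-uniform scaling shape space. -/
def nsShape (d k : ℕ) (R : Matrix (Fin d) (Fin d) ℝ)
    (q : Fin k × Fin d → ℝ) : Set (Fin k × Fin d → ℝ) :=
  {p | ∃ s τ : Fin d → ℝ, p = nsParam d k R q s τ}

/-- The matrix-valued edge weight `diag(Rᵀ(x − y))Rᵀ`. -/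
def nsWeight (d : ℕ) (R : Matrix (Fin d) (Fin d) ℝ) (x y : Fin d → ℝ) :
    Matrix (Fin d) (Fin d) ℝ :=
  Matrix.diagonal (Rᵀ.mulVec (x - y)) * Rᵀ

/-- The padded constraint row block `[… W_jv … W_vi … | −W_vv]` for the
triplet `(i, j, v)`, acting on the extended coordinates. -/
def constraintBlock (d n : ℕ) (i j : Fin n)
    (Wjv Wvi : Matrix (Fin d) (Fin d) ℝ) :
    Matrix (Fin d) ((Fin n × Fin d) ⊕ Fin d) ℝ :=
  Matrix.of fun r c =>
    Sum.elim
      (fun q : Fin n × Fin d =>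
        if q.1 = i then Wjv r q.2 else if q.1 = j then Wvi r q.2 else 0)
      (fun k => -(Wjv + Wvi) r k) c

/-- Kernel of a sum of two PSD matrices is the intersection of kernels. -/
lemma ker_add_psd {N : Type*} [Fintype N] [DecidableEq N]
    {A B : Matrix N N ℝ} (hA : A.PosSemidef) (hB : B.PosSemidef) :
    LinearMap.ker (A + B).mulVecLin = LinearMap.ker A.mulVecLin ⊓ LinearMap.ker B.mulVecLin := by
  ext z
  simp only [LinearMap.mem_ker, Submodule.mem_inf, mulVecLin_apply]
  constructor
  · intro h
    have hq : z ⬝ᵥ A *ᵥ z + z ⬝ᵥ B *ᵥ z = 0 := by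
      rw [← dotProduct_add, ← add_mulVec, h, dotProduct_zero]
    have ha : (0:ℝ) ≤ z ⬝ᵥ A *ᵥ z := by simpa using hA.dotProduct_mulVec_nonneg z
    have hb : (0:ℝ) ≤ z ⬝ᵥ B *ᵥ z := by simpa using hB.dotProduct_mulVec_nonneg z
    have hA0 : A *ᵥ z = 0 := by
      have := hA.dotProduct_mulVec_zero_iff z
      simp only [star_trivial] at this
      exact this.mp (by linarith)
    have hB0 : B *ᵥ z = 0 := by
      have := hB.dotProduct_mulVec_zero_iff z
      simp only [star_trivial] at this
      exact this.mp (by linarith)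
    exact ⟨hA0, hB0⟩
  · rintro ⟨h1, h2⟩; rw [add_mulVec, h1, h2, add_zero]

lemma constraintBlock_mulVec (d n : ℕ) (i j : Fin n) (hij : i ≠ j)
    (Wjv Wvi : Matrix (Fin d) (Fin d) ℝ) (z : (Fin n × Fin d) ⊕ Fin d → ℝ) :
    (constraintBlock d n i j Wjv Wvi) *ᵥ z
      = Wjv *ᵥ (fun k => z (Sum.inl (i, k))) + Wvi *ᵥ (fun k => z (Sum.inl (j, k)))
        - (Wjv + Wvi) *ᵥ (fun k => z (Sum.inr k)) := by
  funext r
  have hsplit : ∀ a : Fin n, ∀ k : Fin d,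
      (if a = i then Wjv r k else if a = j then Wvi r k else 0) * z (Sum.inl (a, k))
        = (if a = i then Wjv r k * z (Sum.inl (a, k)) else 0)
          + (if a = j then Wvi r k * z (Sum.inl (a, k)) else 0) := by
    intro a k
    by_cases h1 : a = i
    · subst h1
      simp [hij, zero_mul]
    · by_cases h2 : a = j <;> simp [h1, h2, Ne.symm hij]
  simp only [constraintBlock, mulVec, dotProduct, Fintype.sum_sum_type, of_apply,
    Sum.elim_inl, Sum.elim_inr, Fintype.sum_prod_type, Pi.add_apply, Pi.sub_apply,
    Matrix.add_apply, Matrix.neg_apply, neg_mul]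
  rw [Finset.sum_congr rfl (fun a _ => Finset.sum_congr rfl (fun k _ => hsplit a k))]
  simp only [Finset.sum_add_distrib, ← Finset.sum_neg_distrib]
  rw [Finset.sum_comm (γ := Fin n)]
  rw [Finset.sum_comm (γ := Fin n) (f := fun a k => if a = j then Wvi r k * z (Sum.inl (a, k)) else 0)]
  simp only [Finset.sum_ite_eq', Finset.mem_univ, if_true]
  rw [Finset.sum_neg_distrib, sub_eq_add_neg]

theorem stmt_14 (d n m : ℕ) (hm : 1 ≤ m) (hmn : m ≤ n)
    (R : Matrix (Fin d) (Fin d) ℝ) (hR : Rᵀ * R = 1) (hdet : R.det = 1)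
    (pt : Fin n × Fin d → ℝ) (ptv : Fin d → ℝ)
    (L : Matrix (Fin n × Fin d) (Fin n × Fin d) ℝ)
    (hLpsd : L.PosSemidef)
    (hker : {x | L.mulVec x = 0} = nsShape d n R pt)
    (hLff : (L.submatrix
        (fun q : {a : Fin n // m ≤ (a : ℕ)} × Fin d => ((q.1 : Fin n), q.2))
        (fun q : {a : Fin n // m ≤ (a : ℕ)} × Fin d => ((q.1 : Fin n), q.2))).PosDef)
    (i j : Fin n) (hij : i ≠ j)
    (hWvv : IsUnit (nsWeight d R (fun k => pt (j, k)) (fun k => pt (i, k))))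
    (dv : Fin d → ℝ) (hdv : ∀ r, 0 < dv r) :
    (Matrix.fromBlocks L 0 0 (0 : Matrix (Fin d) (Fin d) ℝ)
      + (constraintBlock d n i j
            (nsWeight d R (fun k => pt (j, k)) ptv)
            (nsWeight d R ptv (fun k => pt (i, k))))ᵀ
          * Matrix.diagonal dv
          * constraintBlock d n i j
              (nsWeight d R (fun k => pt (j, k)) ptv)
              (nsWeight d R ptv (fun k => pt (i, k)))).rank
      = L.rank + d := by
  classical
  set Wjv := nsWeight d R (fun k => pt (j, k)) ptv with hWjv
  set Wvi := nsWeight d R ptv (fun k => pt (i, k)) with hWvi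
  set C := constraintBlock d n i j Wjv Wvi with hCdef
  set D := Matrix.diagonal dv with hDdef
  set W := Wjv + Wvi with hWdef
  -- W is the invertible matrix from the hypothesis
  have hWsum : W = nsWeight d R (fun k => pt (j, k)) (fun k => pt (i, k)) := by
    rw [hWdef, hWjv, hWvi]
    unfold nsWeight
    have hv : Rᵀ *ᵥ ((fun k => pt (j, k)) - ptv) + Rᵀ *ᵥ (ptv - fun k => pt (i, k))
        = Rᵀ *ᵥ ((fun k => pt (j, k)) - fun k => pt (i, k)) := by
      rw [← Matrix.mulVec_add, sub_add_sub_cancel]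
    rw [← add_mul, Matrix.diagonal_add]
    exact congrArg (fun v => Matrix.diagonal v * Rᵀ) hv
  have hWdet : IsUnit W.det := by
    rw [← Matrix.isUnit_iff_isUnit_det, hWsum]; exact hWvv
  -- positive semidefiniteness of the two summands
  have hA : (Matrix.fromBlocks L 0 0 (0 : Matrix (Fin d) (Fin d) ℝ)).PosSemidef := by
    rw [Matrix.posSemidef_iff_dotProduct_mulVec]
    constructor
    · show _ᴴ = _
      rw [Matrix.fromBlocks_conjTranspose, Matrix.conjTranspose_zero,
        Matrix.conjTranspose_zero, Matrix.conjTranspose_zero, hLpsd.1]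
    · intro z
      have hz : z = Sum.elim (z ∘ Sum.inl) (z ∘ Sum.inr) := (Sum.elim_comp_inl_inr z).symm
      rw [hz]
      rw [Matrix.fromBlocks_mulVec]
      simp only [Matrix.zero_mulVec, add_zero, zero_add, star_trivial]
      rw [sumElim_dotProduct_sumElim]
      have := hLpsd.dotProduct_mulVec_nonneg (z ∘ Sum.inl)
      simp only [star_trivial] at this
      simpa using this
  have hD : D.PosSemidef := Matrix.PosSemidef.diagonal (fun r => (hdv r).le)
  have hB : (Cᵀ * D * C).PosSemidef := by
    have := hD.conjTranspose_mul_mul_same C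
    simpa using this
  -- kernel of the quadratic summand equals kernel of C
  have hkerB : ∀ z, (Cᵀ * D * C) *ᵥ z = 0 ↔ C *ᵥ z = 0 := by
    intro z
    constructor
    · intro h
      have hq : (C *ᵥ z) ⬝ᵥ D *ᵥ (C *ᵥ z) = 0 := by
        have : z ⬝ᵥ (Cᵀ * D * C) *ᵥ z = 0 := by rw [h, dotProduct_zero]
        rwa [Matrix.mul_assoc, ← Matrix.mulVec_mulVec, dotProduct_mulVec,
          Matrix.vecMul_transpose, ← Matrix.mulVec_mulVec] at this
      have hD0 : D *ᵥ (C *ᵥ z) = 0 := by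
        have := hD.dotProduct_mulVec_zero_iff (C *ᵥ z)
        simp only [star_trivial] at this
        exact this.mp hq
      funext r
      have := congrFun hD0 r
      rw [hDdef, Matrix.mulVec_diagonal] at this
      have hr := (hdv r).ne'
      exact (mul_eq_zero.mp this).resolve_left hr
    · intro h
      rw [Matrix.mul_assoc, ← Matrix.mulVec_mulVec, ← Matrix.mulVec_mulVec, h,
        Matrix.mulVec_zero, Matrix.mulVec_zero]
  -- the embedding map
  have hWinvW : W⁻¹ * W = 1 := Matrix.nonsing_inv_mul W hWdet
  have hWWinv : W * W⁻¹ = 1 := Matrix.mul_nonsing_inv W hWdet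
  let T : (Fin n × Fin d → ℝ) → (Fin d → ℝ) := fun x =>
    W⁻¹ *ᵥ (Wjv *ᵥ (fun k => x (i, k)) + Wvi *ᵥ (fun k => x (j, k)))
  let Φ : (Fin n × Fin d → ℝ) →ₗ[ℝ] ((Fin n × Fin d) ⊕ Fin d → ℝ) :=
    { toFun := fun x => Sum.elim x (T x)
      map_add' := by
        intro x y
        funext c
        cases c with
        | inl q => simp
        | inr k =>
          show T (x + y) k = T x k + T y k
          have h1 : (fun k => x (i, k) + y (i, k)) = (fun k => x (i, k)) + fun k => y (i, k) :=
            rfl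
          have h2 : (fun k => x (j, k) + y (j, k)) = (fun k => x (j, k)) + fun k => y (j, k) :=
            rfl
          simp only [T, Pi.add_apply, h1, h2, Matrix.mulVec_add]
          ring
      map_smul' := by
        intro c x
        funext w
        cases w with
        | inl q => simp
        | inr k =>
          show T (c • x) k = (c • T x) k
          have h1 : (fun k => (c • x) (i, k)) = c • fun k => x (i, k) := rfl
          have h2 : (fun k => (c • x) (j, k)) = c • fun k => x (j, k) := rfl
          simp only [T, h1, h2, Matrix.mulVec_smul, ← smul_add] }
  have hΦinj : Function.Injective Φ := by
    intro x y h
    funext q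
    exact congrFun h (Sum.inl q)
  -- kernel identification
  have key : LinearMap.ker (Matrix.fromBlocks L 0 0 (0 : Matrix (Fin d) (Fin d) ℝ)
        + Cᵀ * D * C).mulVecLin
      = Submodule.map Φ (LinearMap.ker L.mulVecLin) := by
    rw [ker_add_psd hA hB]
    ext z
    simp only [Submodule.mem_inf, LinearMap.mem_ker, mulVecLin_apply, Submodule.mem_map]
    constructor
    · rintro ⟨h1, h2⟩
      have hz : z = Sum.elim (z ∘ Sum.inl) (z ∘ Sum.inr) := (Sum.elim_comp_inl_inr z).symm
      have hL : L *ᵥ (z ∘ Sum.inl) = 0 := by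
        rw [hz, Matrix.fromBlocks_mulVec] at h1
        simp only [Matrix.zero_mulVec, add_zero, zero_add] at h1
        have := congrFun h1
        funext r
        simpa using this (Sum.inl r)
      have hC : C *ᵥ z = 0 := (hkerB z).mp h2
      rw [hCdef, constraintBlock_mulVec d n i j hij] at hC
      have hWz : W *ᵥ (fun k => z (Sum.inr k))
          = Wjv *ᵥ (fun k => z (Sum.inl (i, k))) + Wvi *ᵥ (fun k => z (Sum.inl (j, k))) := by
        rw [← hWdef] at hC
        have := sub_eq_zero.mp hC
        exact this.symm
      refine ⟨z ∘ Sum.inl, hL, ?_⟩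
      funext c
      cases c with
      | inl q => rfl
      | inr k =>
        show T (z ∘ Sum.inl) k = z (Sum.inr k)
        have : T (z ∘ Sum.inl) = W⁻¹ *ᵥ (W *ᵥ fun k => z (Sum.inr k)) := by
          simp only [T]
          rw [hWz]
          rfl
        rw [this, Matrix.mulVec_mulVec, hWinvW, Matrix.one_mulVec]
    · rintro ⟨x, hx, rfl⟩
      constructor
      · have : (Φ x : (Fin n × Fin d) ⊕ Fin d → ℝ) = Sum.elim x (T x) := rfl
        rw [this, Matrix.fromBlocks_mulVec]
        simp only [Matrix.zero_mulVec, add_zero, zero_add, hx]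
        funext c
        cases c <;> simp [hx]
      · rw [hkerB]
        rw [hCdef, constraintBlock_mulVec d n i j hij]
        have hinl : (fun k => (Φ x) (Sum.inl (i, k))) = fun k => x (i, k) := rfl
        have hinl' : (fun k => (Φ x) (Sum.inl (j, k))) = fun k => x (j, k) := rfl
        have hinr : (fun k => (Φ x) (Sum.inr k)) = T x := rfl
        rw [hinl, hinl', hinr, ← hWdef]
        show _ - W *ᵥ (W⁻¹ *ᵥ _) = 0
        rw [Matrix.mulVec_mulVec, hWWinv, Matrix.one_mulVec, sub_self]
  -- now count dimensions
  have hfin1 := LinearMap.finrank_range_add_finrank_ker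
    (Matrix.fromBlocks L 0 0 (0 : Matrix (Fin d) (Fin d) ℝ) + Cᵀ * D * C).mulVecLin
  have hfin2 := LinearMap.finrank_range_add_finrank_ker L.mulVecLin
  have hdim1 : Module.finrank ℝ (((Fin n × Fin d) ⊕ Fin d) → ℝ) = n * d + d := by
    simp [Module.finrank_pi]
  have hdim2 : Module.finrank ℝ ((Fin n × Fin d) → ℝ) = n * d := by
    simp [Module.finrank_pi]
  rw [hdim1] at hfin1
  rw [hdim2] at hfin2
  have hkereq : Module.finrank ℝ (LinearMap.ker (Matrix.fromBlocks L 0 0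
        (0 : Matrix (Fin d) (Fin d) ℝ) + Cᵀ * D * C).mulVecLin)
      = Module.finrank ℝ (LinearMap.ker L.mulVecLin) := by
    rw [key]
    exact (LinearEquiv.finrank_eq
      (Submodule.equivMapOfInjective Φ hΦinj (LinearMap.ker L.mulVecLin))).symm
  rw [hkereq] at hfin1
  have hr1 : (Matrix.fromBlocks L 0 0 (0 : Matrix (Fin d) (Fin d) ℝ) + Cᵀ * D * C).rank
      = Module.finrank ℝ (LinearMap.range (Matrix.fromBlocks L 0 0
        (0 : Matrix (Fin d) (Fin d) ℝ) + Cᵀ * D * C).mulVecLin) := rfl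
  have hr2 : L.rank = Module.finrank ℝ (LinearMap.range L.mulVecLin) := rfl
  rw [hr1, hr2]
  omega
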